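/- Let α, β, μ be positive reals with α + β > 2, take constant rate functions K1(n) = α, K2(n) = β, K3(n) = μ for all n, and let (a_n) be the paper's auxiliary sequence a associated with these constant rates; thus a_1 = μ and a_n = μ·a_{n−1} + μ·β·Σ_{i=1}^{n−2} a_i·∏_{j=i+1}^{n−2}(j + α + β) + μ·β·∏_{i=1}^{n−2}(i + α + β) for n ≥ 2. Then a_n/n! → ∞ as n → ∞. -/
import Mathlib

open Finset

private lemma weier (s : Finset ℕ) (f : ℕ → ℝ) (hf : ∀ i ∈ s, 0 ≤ f i) :
    1 + ∑ i ∈ s, f i ≤ ∏ i ∈ s, (1 + f i) := by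
  classical
  induction s using Finset.induction_on with
  | empty => simp
  | @insert x s' hx ih =>
    rw [Finset.sum_insert hx, Finset.prod_insert hx]
    have h1 : 1 + ∑ i ∈ s', f i ≤ ∏ i ∈ s', (1 + f i) :=
      ih (fun i hi => hf i (Finset.mem_insert_of_mem hi))
    have hfx : 0 ≤ f x := hf x (Finset.mem_insert_self x s')
    have hsum : 0 ≤ ∑ i ∈ s', f i :=
      Finset.sum_nonneg (fun i hi => hf i (Finset.mem_insert_of_mem hi))
    nlinarith

private lemma sum_Icc_one_shift (m : ℕ) (f : ℕ → ℝ) :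
    ∑ i ∈ Icc 1 m, f i = ∑ i ∈ range m, f (1 + i) := by
  rw [← Finset.Ico_add_one_right_eq_Icc, Finset.sum_Ico_eq_sum_range]
  simp

private lemma prod_Icc_add_two (m : ℕ) :
    ∏ i ∈ Icc 1 m, ((i : ℝ) + 2) = ((m + 2).factorial : ℝ) / 2 := by
  induction m with
  | zero => simp [Nat.factorial]
  | succ m ih =>
    rw [Finset.prod_Icc_succ_top (by omega), ih]
    have : (m + 1 + 2).factorial = (m + 3) * (m + 2).factorial := rfl
    rw [show m + 1 + 2 = m + 3 from rfl, this]
    push_cast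
    ring

/-- For constant normalized rates `α, β, μ > 0` with `α + β > 2`, the paper's auxiliary
sequence `a` satisfies `a_n / n! → ∞` as `n → ∞`. -/
theorem aux_a_div_factorial_tendsto_atTop (α β μ : ℝ)
    (hα : 0 < α) (hβ : 0 < β) (hμ : 0 < μ) (hαβ : 2 < α + β)
    (a : ℕ → ℝ)
    (ha1 : a 1 = μ)
    (haRec : ∀ n : ℕ, 2 ≤ n →
      a n = μ * a (n - 1)
        + μ * β * ∑ i ∈ Finset.Icc 1 (n - 2), a i *
            ∏ j ∈ Finset.Icc (i + 1) (n - 2), ((j : ℝ) + α + β)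
        + μ * β * ∏ i ∈ Finset.Icc 1 (n - 2), ((i : ℝ) + α + β)) :
    Filter.Tendsto (fun n : ℕ => a n / (n.factorial : ℝ)) Filter.atTop Filter.atTop := by
  set c : ℝ := α + β - 2 with hc
  have hcpos : 0 < c := by simp [hc]; linarith
  have hprodpos : ∀ (s : Finset ℕ), 0 < ∏ j ∈ s, ((j : ℝ) + α + β) := by
    intro s
    apply Finset.prod_pos
    intro j _
    have : (0:ℝ) ≤ (j:ℝ) := Nat.cast_nonneg j
    linarith
  -- positivity of a
  have apos : ∀ n, 1 ≤ n → 0 < a n := by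
    intro n
    induction n using Nat.strong_induction_on with
    | _ n ih =>
      intro hn
      rcases eq_or_lt_of_le hn with h | h
      · rw [← h, ha1]; exact hμ
      · have h2 : 2 ≤ n := h
        rw [haRec n h2]
        have t1 : 0 < μ * a (n - 1) :=
          mul_pos hμ (ih (n - 1) (by omega) (by omega))
        have t2 : 0 ≤ μ * β * ∑ i ∈ Finset.Icc 1 (n - 2), a i *
            ∏ j ∈ Finset.Icc (i + 1) (n - 2), ((j : ℝ) + α + β) := by
          apply mul_nonneg (by positivity)
          apply Finset.sum_nonneg
          intro i hi
          have hi' := Finset.mem_Icc.mp hi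
          exact mul_nonneg (ih i (by omega) hi'.1).le (hprodpos _).le
        have t3 : 0 < μ * β * ∏ i ∈ Finset.Icc 1 (n - 2), ((i : ℝ) + α + β) :=
          mul_pos (mul_pos hμ hβ) (hprodpos _)
        linarith
  -- lower bound on a n
  have alb : ∀ n : ℕ, 2 ≤ n →
      μ * β * ∏ i ∈ Finset.Icc 1 (n - 2), ((i : ℝ) + α + β) ≤ a n := by
    intro n h2
    rw [haRec n h2]
    have t1 : 0 < μ * a (n - 1) := mul_pos hμ (apos (n - 1) (by omega))
    have t2 : 0 ≤ μ * β * ∑ i ∈ Finset.Icc 1 (n - 2), a i *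
        ∏ j ∈ Finset.Icc (i + 1) (n - 2), ((j : ℝ) + α + β) := by
      apply mul_nonneg (by positivity)
      apply Finset.sum_nonneg
      intro i hi
      have hi' := Finset.mem_Icc.mp hi
      exact mul_nonneg (apos i hi'.1).le (hprodpos _).le
    linarith
  -- product lower bound
  have prodlb : ∀ m : ℕ,
      ((m + 2).factorial : ℝ) / 2 * (1 + ∑ i ∈ Icc 1 m, c / ((i : ℝ) + 2)) ≤
        ∏ i ∈ Icc 1 m, ((i : ℝ) + α + β) := by
    intro m
    have hsplit : ∀ i : ℕ, (i : ℝ) + α + β = ((i : ℝ) + 2) * (1 + c / ((i : ℝ) + 2)) := by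
      intro i
      have hi2 : (0:ℝ) < (i : ℝ) + 2 := by positivity
      field_simp
      ring
    calc ((m + 2).factorial : ℝ) / 2 * (1 + ∑ i ∈ Icc 1 m, c / ((i : ℝ) + 2))
        ≤ ((m + 2).factorial : ℝ) / 2 * ∏ i ∈ Icc 1 m, (1 + c / ((i : ℝ) + 2)) := by
          apply mul_le_mul_of_nonneg_left _ (by positivity)
          exact weier _ _ (fun i _ => by positivity)
      _ = ∏ i ∈ Icc 1 m, ((i : ℝ) + α + β) := by
          rw [← prod_Icc_add_two m, ← Finset.prod_mul_distrib]
          exact Finset.prod_congr rfl (fun i _ => (hsplit i).symm)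
  -- the harmonic-type sum tends to atTop
  have hS : Filter.Tendsto (fun m : ℕ => ∑ i ∈ Icc 1 m, c / ((i : ℝ) + 2))
      Filter.atTop Filter.atTop := by
    have hbase := Real.tendsto_sum_range_one_div_nat_succ_atTop
    have h3 : Filter.Tendsto (fun m : ℕ => (c / 3) * ∑ i ∈ Finset.range m, (1 / ((i : ℝ) + 1)))
        Filter.atTop Filter.atTop := hbase.const_mul_atTop (by positivity)
    apply Filter.tendsto_atTop_mono _ h3
    intro m
    rw [Finset.mul_sum, sum_Icc_one_shift m (fun i => c / ((i : ℝ) + 2))]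
    apply Finset.sum_le_sum
    intro i _
    have hi0 : (0:ℝ) ≤ (i:ℝ) := Nat.cast_nonneg i
    have he : c / 3 * (1 / ((i:ℝ) + 1)) = c / (3 * ((i:ℝ) + 1)) := by
      field_simp
    rw [he]
    push_cast
    apply div_le_div_of_nonneg_left hcpos.le (by linarith) (by linarith)
  have hg : Filter.Tendsto (fun n : ℕ =>
      μ * β / 2 * (1 + ∑ i ∈ Icc 1 (n - 2), c / ((i : ℝ) + 2))) Filter.atTop Filter.atTop := by
    apply Filter.Tendsto.const_mul_atTop (by positivity)
    apply Filter.tendsto_atTop_add_const_left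
    exact hS.comp (Filter.tendsto_sub_atTop_nat 2)
  apply Filter.tendsto_atTop_mono' Filter.atTop _ hg
  filter_upwards [Filter.eventually_ge_atTop 2] with n hn
  have hfac : (0:ℝ) < (n.factorial : ℝ) := by exact_mod_cast n.factorial_pos
  rw [le_div_iff₀ hfac]
  have h1 := prodlb (n - 2)
  have h2 := alb n hn
  have hnf : ((n - 2 + 2).factorial : ℝ) = (n.factorial : ℝ) := by
    have h : n - 2 + 2 = n := by omega
    rw [h]
  rw [hnf] at h1
  have h3 : μ * β * (((n.factorial : ℝ)) / 2 * (1 + ∑ i ∈ Icc 1 (n - 2), c / ((i : ℝ) + 2)))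
      ≤ μ * β * ∏ i ∈ Finset.Icc 1 (n - 2), ((i : ℝ) + α + β) :=
    mul_le_mul_of_nonneg_left h1 (by positivity)
  calc μ * β / 2 * (1 + ∑ i ∈ Icc 1 (n - 2), c / ((i : ℝ) + 2)) * (n.factorial : ℝ)
      = μ * β * (((n.factorial : ℝ)) / 2 * (1 + ∑ i ∈ Icc 1 (n - 2), c / ((i : ℝ) + 2))) := by ring
    _ ≤ μ * β * ∏ i ∈ Finset.Icc 1 (n - 2), ((i : ℝ) + α + β) := h3
    _ ≤ a n := h2
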